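/- Let M be a strongly base orderable matroid with disjoint bases R₁, B₁ and disjoint bases R₂, B₂ satisfying R₁ ∪ B₁ = R₂ ∪ B₂. Let φ₁ : R₁ → B₁ be a bijection witnessing strong base orderability. Let G be the bipartite-like graph on R₁ ∪ B₁ whose edges pair each e ∈ R₁ with φ₁(e) and each f ∈ R₂ with φ₂(f) (for the analogous bijection φ₂ : R₂ → B₂), and let S, T be the two color classes of G. Then both S and T are bases of M. -/

import Mathlib

open Set

variable {α : Type*}

/-- For a strongly base orderable matroid `M` with disjoint bases `R₁, B₁` and disjoint
bases `R₂, B₂` satisfying `R₁ ∪ B₁ = R₂ ∪ B₂`, let `φ₁ : R₁ → B₁` and `φ₂ : R₂ → B₂` be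
bijections witnessing strong base orderability. If `S, T` are the two color classes of the
bipartite graph on `R₁ ∪ B₁` whose edges pair each `e ∈ R₁` with `φ₁ e` and each `f ∈ R₂`
with `φ₂ f` (i.e. `S, T` partition `R₁ ∪ B₁` and every such edge has one endpoint in `S`
and the other in `T`), then both `S` and `T` are bases of `M`. -/
theorem stmt4 (M : Matroid α) (R₁ B₁ R₂ B₂ : Set α)
    (hR₁ : M.IsBase R₁) (hB₁ : M.IsBase B₁) (hd₁ : Disjoint R₁ B₁)
    (hR₂ : M.IsBase R₂) (hB₂ : M.IsBase B₂) (hd₂ : Disjoint R₂ B₂)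
    (hcompat : R₁ ∪ B₁ = R₂ ∪ B₂)
    (φ₁ φ₂ : α → α)
    (hφ₁ : Set.BijOn φ₁ R₁ B₁) (hφ₁base : ∀ X ⊆ R₁, M.IsBase ((R₁ \ X) ∪ φ₁ '' X))
    (hφ₂ : Set.BijOn φ₂ R₂ B₂) (hφ₂base : ∀ X ⊆ R₂, M.IsBase ((R₂ \ X) ∪ φ₂ '' X))
    (S T : Set α)
    (hST : S ∪ T = R₁ ∪ B₁) (hdST : Disjoint S T)
    (hcross₁ : ∀ e ∈ R₁, (e ∈ S ↔ φ₁ e ∈ T))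
    (hcross₂ : ∀ f ∈ R₂, (f ∈ S ↔ φ₂ f ∈ T)) :
    M.IsBase S ∧ M.IsBase T := by
  -- In S∪T = R₁∪B₁, membership in S is equivalent to non-membership in T.
  have hmem : ∀ a ∈ R₁ ∪ B₁, (a ∈ S ↔ a ∉ T) := by
    intro a ha
    constructor
    · intro hs ht; exact hdST.ne_of_mem hs ht rfl
    · intro ht
      have : a ∈ S ∪ T := hST ▸ ha
      rcases this with h | h
      · exact h
      · exact absurd h ht
  have hS : S = (R₁ \ (R₁ ∩ T)) ∪ φ₁ '' (R₁ ∩ T) := by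
    ext a
    constructor
    · intro haS
      have haRB : a ∈ R₁ ∪ B₁ := hST ▸ (Or.inl haS)
      rcases haRB with haR | haB
      · exact Or.inl ⟨haR, fun h => ((hmem a (Or.inl haR)).mp haS) h.2⟩
      · obtain ⟨e, heR, rfl⟩ := hφ₁.surjOn haB
        have h1 : φ₁ e ∉ T := (hmem _ (Or.inr haB)).mp haS
        have h2 : e ∉ S := fun hs => h1 ((hcross₁ e heR).mp hs)
        have h3 : e ∈ T := by
          by_contra h
          exact h2 ((hmem e (Or.inl heR)).mpr h)
        exact Or.inr ⟨e, ⟨heR, h3⟩, rfl⟩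
    · rintro (⟨haR, haX⟩ | ⟨e, ⟨heR, heT⟩, rfl⟩)
      · exact (hmem a (Or.inl haR)).mpr (fun h => haX ⟨haR, h⟩)
      · have h2 : e ∉ S := fun hs => (hdST.ne_of_mem hs heT) rfl
        have h3 : φ₁ e ∉ T := fun h => h2 ((hcross₁ e heR).mpr h)
        exact (hmem _ (Or.inr (hφ₁.mapsTo heR))).mpr h3
  have hT : T = (R₁ \ (R₁ ∩ S)) ∪ φ₁ '' (R₁ ∩ S) := by
    ext a
    constructor
    · intro haT
      have haRB : a ∈ R₁ ∪ B₁ := hST ▸ (Or.inr haT)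
      rcases haRB with haR | haB
      · exact Or.inl ⟨haR, fun h => ((hmem a (Or.inl haR)).mp h.2) haT⟩
      · obtain ⟨e, heR, rfl⟩ := hφ₁.surjOn haB
        have h2 : e ∈ S := (hcross₁ e heR).mpr haT
        exact Or.inr ⟨e, ⟨heR, h2⟩, rfl⟩
    · rintro (⟨haR, haX⟩ | ⟨e, ⟨heR, heS⟩, rfl⟩)
      · by_contra h
        exact haX ⟨haR, (hmem a (Or.inl haR)).mpr h⟩
      · exact (hcross₁ e heR).mp heS
  constructor
  · rw [hS]; exact hφ₁base _ inter_subset_left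
  · rw [hT]; exact hφ₁base _ inter_subset_left
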